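/- arXiv:1803.06156 — 2 statements merged into one kernel-verified Lean document; each statement's English description precedes it below -/
import Mathlib

section
/- Suppose for data f ∈ ℝ^N there exists a partition 𝓘' and ε > 0 with 𝓖_{𝓘'}(f) < 𝓖_𝓘(f) - ε for all partitions 𝓘 not equivalent to 𝓘'. Then with δ = min( ε / (2(2β)^{2k}(‖f‖ + 1/2)), 1/2 ), for every g with ‖g - f‖ < δ the higher order Mumford-Shah problem for data g has a unique minimizer and its optimal partition is equivalent to 𝓘'. -/
open Finset Matrix

/-- `diffEnergy k q v = ‖∇ᵏ v‖₂²`, where `∇ᵏ` is the k-th order finite difference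
operator whose rows are shifts of the k-fold convolution of `(-1, 1)` with itself;
it is the empty map (energy `0`) when `q ≤ k`. -/
noncomputable def diffEnergy (k q : ℕ) (v : Fin q → ℝ) : ℝ :=
  ∑ i : Fin (q - k), (∑ j : Fin (k + 1),
    (-1 : ℝ) ^ (k - j.val) * (Nat.choose k j.val : ℝ) *
      v ⟨i.val + j.val, by have hi := i.isLt; have hj := j.isLt; omega⟩) ^ 2

/-- The k-th order smoothing spline approximation error
`E = min_v ‖v - g‖₂² + β^{2k} ‖∇ᵏ v‖₂²` for data `g` on an interval of length `q`. -/
noncomputable def splineError (k : ℕ) (β : ℝ) {q : ℕ} (g : Fin q → ℝ) : ℝ :=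
  ⨅ v : Fin q → ℝ, (∑ i, (v i - g i) ^ 2) + β ^ (2 * k) * diffEnergy k q v

/-- A partition of `{1,...,N}` into consecutive discrete intervals, encoded by its
boundaries `0 = b 0 < b 1 < ... < b M = N`; the m-th segment consists of the
(0-indexed) indices `b m, ..., b (m+1) - 1`, and `M` is the number of segments. -/
structure IPart (N : ℕ) where
  M : ℕ
  b : Fin (M + 1) → ℕ
  mono : StrictMono b
  first : b 0 = 0
  last : b (Fin.last M) = N

/-- Length of the `m`-th segment of the partition. -/
def IPart.len {N : ℕ} (P : IPart N) (m : Fin P.M) : ℕ :=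
  P.b m.succ - P.b m.castSucc

theorem IPart.idx_lt {N : ℕ} (P : IPart N) (m : Fin P.M) (i : Fin (P.len m)) :
    P.b m.castSucc + i.val < N := by
  have h1 : i.val < P.b m.succ - P.b m.castSucc := i.isLt
  have h2 : P.b m.succ ≤ N := by
    have h := P.mono.monotone (Fin.le_last m.succ)
    rwa [P.last] at h
  omega

/-- Restriction `f_I` of a signal `f` to the `m`-th segment `I` of the partition. -/
def IPart.restrict {N : ℕ} (P : IPart N) (f : Fin N → ℝ) (m : Fin P.M) :
    Fin (P.len m) → ℝ :=
  fun i => f ⟨P.b m.castSucc + i.val, P.idx_lt m i⟩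

/-- Row index type of the block-diagonal k-th order finite difference matrix `L_𝓘`:
one block of `len - k` rows per segment (an empty block when `len ≤ k`). -/
abbrev IPart.RowIdx {N : ℕ} (P : IPart N) (k : ℕ) : Type :=
  Σ m : Fin P.M, Fin (P.len m - k)

/-- The block-diagonal k-th order finite difference matrix `L_𝓘` of a partition. -/
noncomputable def IPart.L {N : ℕ} (P : IPart N) (k : ℕ) :
    Matrix (P.RowIdx k) (Fin N) ℝ :=
  Matrix.of fun r c => ∑ t ∈ Finset.range (k + 1),
    if (c : ℕ) = P.b r.1.castSucc + r.2.val + t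
    then (-1 : ℝ) ^ (k - t) * (Nat.choose k t : ℝ) else 0

/-- `S_{𝓘,β} = (β^{2k} L_𝓘ᵀ L_𝓘 + id)⁻¹`. -/
noncomputable def Smat {N : ℕ} (P : IPart N) (k : ℕ) (β : ℝ) :
    Matrix (Fin N) (Fin N) ℝ :=
  (β ^ (2 * k) • ((P.L k)ᵀ * P.L k) + 1)⁻¹

/-- Squared Euclidean norm. -/
noncomputable def normSq {ι : Type*} [Fintype ι] (x : ι → ℝ) : ℝ := ∑ i, x i ^ 2

/-- Two partitions are equivalent iff they have the same intervals of length
`> k` (i.e. of minimum length `k + 1`). -/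
def equivk {N : ℕ} (k : ℕ) (P Q : IPart N) : Prop :=
  {p : ℕ × ℕ | ∃ m : Fin P.M, p = (P.b m.castSucc, P.b m.succ) ∧ k < P.len m} =
  {p : ℕ × ℕ | ∃ m : Fin Q.M, p = (Q.b m.castSucc, Q.b m.succ) ∧ k < Q.len m}

/-- `|[𝓘]|`: the minimal number of segments among partitions equivalent to `𝓘`. -/
noncomputable def classCard {N : ℕ} (k : ℕ) (P : IPart N) : ℕ :=
  sInf {M' | ∃ Q : IPart N, equivk k Q P ∧ Q.M = M'}

/-- `𝓖_𝓘(f) = β^{2k}‖L_𝓘 S_𝓘 f‖₂² + ‖S_𝓘 f - f‖₂² + γ|[𝓘]|`, the value of the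
Mumford-Shah functional for data `f` restricted to the equivalence class of `𝓘`. -/
noncomputable def Gc {N : ℕ} (k : ℕ) (β γ : ℝ) (f : Fin N → ℝ) (P : IPart N) : ℝ :=
  β ^ (2 * k) * normSq ((P.L k) *ᵥ (Smat P k β *ᵥ f))
    + normSq (Smat P k β *ᵥ f - f) + γ * classCard k P

/-- The higher order Mumford-Shah functional
`‖u - g‖₂² + β^{2k} Σ_{I∈𝓘}‖∇ᵏ u_I‖₂² + γ|𝓘|`. -/
noncomputable def msF {N : ℕ} (k : ℕ) (β γ : ℝ) (g u : Fin N → ℝ)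
    (P : IPart N) : ℝ :=
  (∑ i, (u i - g i) ^ 2)
    + β ^ (2 * k) * ∑ m : Fin P.M, diffEnergy k (P.len m) (P.restrict u m)
    + γ * P.M

section Aux

variable {N : ℕ}

lemma normSq_eq_dot {ι : Type*} [Fintype ι] (x : ι → ℝ) : normSq x = x ⬝ᵥ x := by
  unfold normSq dotProduct
  exact Finset.sum_congr rfl fun i _ => sq (x i)

lemma normSq_nonneg' {ι : Type*} [Fintype ι] (x : ι → ℝ) : 0 ≤ normSq x :=
  Finset.sum_nonneg fun i _ => sq_nonneg _

lemma normSq_eq_zero' {ι : Type*} [Fintype ι] {x : ι → ℝ} (h : normSq x = 0) : x = 0 := by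
  funext i
  have h2 := (Finset.sum_eq_zero_iff_of_nonneg (fun i _ => sq_nonneg (x i))).mp h i
    (Finset.mem_univ i)
  exact pow_eq_zero_iff (two_ne_zero) |>.mp h2

lemma normSq_smul {ι : Type*} [Fintype ι] (a : ℝ) (x : ι → ℝ) :
    normSq (a • x) = a ^ 2 * normSq x := by
  unfold normSq
  rw [Finset.mul_sum]
  exact Finset.sum_congr rfl fun i _ => by simp [mul_pow]

lemma dot_le_sqrt {ι : Type*} [Fintype ι] (x y : ι → ℝ) :
    x ⬝ᵥ y ≤ Real.sqrt (normSq x) * Real.sqrt (normSq y) := by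
  have h := Finset.sum_mul_sq_le_sq_mul_sq Finset.univ x y
  have h1 : x ⬝ᵥ y ≤ |x ⬝ᵥ y| := le_abs_self _
  have h2 : |x ⬝ᵥ y| ^ 2 ≤ normSq x * normSq y := by
    simpa [normSq, dotProduct, sq_abs] using h
  have h3 : |x ⬝ᵥ y| ≤ Real.sqrt (normSq x * normSq y) := by
    rw [← Real.sqrt_sq (abs_nonneg _)]
    exact Real.sqrt_le_sqrt h2
  rw [Real.sqrt_mul (normSq_nonneg' x)] at h3
  exact h1.trans h3

lemma normSq_add_expand {ι : Type*} [Fintype ι] (x y : ι → ℝ) :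
    normSq (x + y) = normSq x + 2 * (x ⬝ᵥ y) + normSq y := by
  unfold normSq dotProduct
  rw [Finset.mul_sum, ← Finset.sum_add_distrib, ← Finset.sum_add_distrib]
  exact Finset.sum_congr rfl fun i _ => by simp [Pi.add_apply]; ring

lemma nrm_add_le {ι : Type*} [Fintype ι] (x y : ι → ℝ) :
    Real.sqrt (normSq (x + y)) ≤ Real.sqrt (normSq x) + Real.sqrt (normSq y) := by
  have hb : normSq (x + y) ≤ (Real.sqrt (normSq x) + Real.sqrt (normSq y)) ^ 2 := by
    have hx : Real.sqrt (normSq x) ^ 2 = normSq x := Real.sq_sqrt (normSq_nonneg' x)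
    have hy : Real.sqrt (normSq y) ^ 2 = normSq y := Real.sq_sqrt (normSq_nonneg' y)
    have hcs := dot_le_sqrt x y
    rw [normSq_add_expand]
    nlinarith
  calc Real.sqrt (normSq (x + y))
      ≤ Real.sqrt ((Real.sqrt (normSq x) + Real.sqrt (normSq y)) ^ 2) :=
        Real.sqrt_le_sqrt hb
    _ = _ := Real.sqrt_sq (by positivity)

/-- extension of a vector by zero -/
noncomputable def vext (N : ℕ) (x : Fin N → ℝ) : ℕ → ℝ :=
  fun j => if h : j < N then x ⟨j, h⟩ else 0

lemma vext_lt {N : ℕ} (x : Fin N → ℝ) {j : ℕ} (h : j < N) :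
    vext N x j = x ⟨j, h⟩ := dif_pos h

lemma IPart.idx_lt' (P : IPart N) {k : ℕ} (m : Fin P.M) {i t : ℕ}
    (hi : i < P.len m - k) (ht : t < k + 1) : P.b m.castSucc + i + t < N := by
  have h2 : P.b m.succ ≤ N := by
    have h := P.mono.monotone (Fin.le_last m.succ)
    rwa [P.last] at h
  have : P.len m = P.b m.succ - P.b m.castSucc := rfl
  omega

lemma L_mulVec (P : IPart N) (k : ℕ) (x : Fin N → ℝ) (r : P.RowIdx k) :
    (P.L k *ᵥ x) r = ∑ t ∈ Finset.range (k + 1),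
      (-1 : ℝ) ^ (k - t) * (Nat.choose k t : ℝ) *
        vext N x (P.b r.1.castSucc + r.2.val + t) := by
  unfold Matrix.mulVec dotProduct IPart.L
  simp only [Matrix.of_apply]
  simp_rw [Finset.sum_mul]
  rw [Finset.sum_comm]
  refine Finset.sum_congr rfl fun t ht => ?_
  have hn : P.b r.1.castSucc + r.2.val + t < N :=
    P.idx_lt' r.1 r.2.isLt (Finset.mem_range.mp ht)
  have hcond : ∀ c : Fin N, ((c : ℕ) = P.b r.1.castSucc + r.2.val + t) = (c = ⟨_, hn⟩) :=
    fun c => propext ⟨fun h => Fin.ext h, fun h => by rw [h]⟩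
  simp_rw [ite_mul, zero_mul, hcond]
  rw [Finset.sum_ite_eq' Finset.univ]
  simp [vext_lt x hn]

end Aux

section Aux2
variable {N : ℕ}

lemma diff_sum_eq (P : IPart N) (k : ℕ) (u : Fin N → ℝ) :
    ∑ m : Fin P.M, diffEnergy k (P.len m) (P.restrict u m) = normSq (P.L k *ᵥ u) := by
  unfold normSq
  rw [← Finset.univ_sigma_univ, Finset.sum_sigma]
  refine Finset.sum_congr rfl fun m _ => ?_
  unfold diffEnergy
  refine Finset.sum_congr rfl fun i _ => ?_
  congr 1
  rw [L_mulVec]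
  rw [← Fin.sum_univ_eq_sum_range (fun t => (-1 : ℝ) ^ (k - t) * (Nat.choose k t : ℝ) *
        vext N u (P.b m.castSucc + i.val + t)) (k + 1)]
  refine Finset.sum_congr rfl fun j _ => ?_
  congr 1
  unfold IPart.restrict
  rw [vext_lt u (P.idx_lt' m i.isLt j.isLt)]
  congr 1
  apply Fin.ext
  simp [Nat.add_assoc]

/-- the finset of "long" intervals of a partition -/
noncomputable def pairsF (P : IPart N) (k : ℕ) : Finset (ℕ × ℕ) :=
  (Finset.univ.filter (fun m => k < P.len m)).image
    (fun m => (P.b m.castSucc, P.b m.succ))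

lemma pair_inj (P : IPart N) :
    Function.Injective (fun m : Fin P.M => (P.b m.castSucc, P.b m.succ)) := by
  intro a b h
  have h1 : P.b a.castSucc = P.b b.castSucc := congrArg Prod.fst h
  have h2 := P.mono.injective h1
  exact Fin.castSucc_injective _ h2

def equivk' {N : ℕ} (k : ℕ) (P Q : IPart N) : Prop :=
  {p : ℕ × ℕ | ∃ m : Fin P.M, p = (P.b m.castSucc, P.b m.succ) ∧ k < P.len m} =
  {p : ℕ × ℕ | ∃ m : Fin Q.M, p = (Q.b m.castSucc, Q.b m.succ) ∧ k < Q.len m}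

lemma coe_pairsF (P : IPart N) (k : ℕ) :
    (pairsF P k : Set (ℕ × ℕ))
      = {p : ℕ × ℕ | ∃ m : Fin P.M, p = (P.b m.castSucc, P.b m.succ) ∧ k < P.len m} := by
  ext p
  simp only [pairsF, Finset.coe_image, Finset.coe_filter, Finset.mem_univ, true_and,
    Set.mem_image, Set.mem_setOf_eq]
  constructor
  · rintro ⟨m, h1, h2⟩; exact ⟨m, h2.symm, h1⟩
  · rintro ⟨m, h1, h2⟩; exact ⟨m, h2, h1.symm⟩

lemma equivk'_pairsF {k : ℕ} {P Q : IPart N} (h : equivk' k P Q) :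
    pairsF P k = pairsF Q k := by
  apply Finset.coe_injective
  rw [coe_pairsF, coe_pairsF]
  exact h

lemma sum_pairs (P : IPart N) (k : ℕ) (F : ℕ × ℕ → ℝ)
    (hF : ∀ p : ℕ × ℕ, p.2 - p.1 ≤ k → F p = 0) :
    ∑ m : Fin P.M, F (P.b m.castSucc, P.b m.succ) = ∑ p ∈ pairsF P k, F p := by
  rw [pairsF, Finset.sum_image (fun a _ b _ hab => pair_inj P hab), Finset.sum_filter]
  refine Finset.sum_congr rfl fun m _ => ?_
  by_cases h : k < P.len m
  · rw [if_pos h]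
  · have hlen : P.len m ≤ k := Nat.le_of_not_lt h
    rw [if_neg h]
    exact hF (P.b m.castSucc, P.b m.succ) hlen

lemma sum_pairs_congr {k : ℕ} {P Q : IPart N} (h : equivk' k P Q) (F : ℕ × ℕ → ℝ)
    (hF : ∀ p : ℕ × ℕ, p.2 - p.1 ≤ k → F p = 0) :
    ∑ m : Fin P.M, F (P.b m.castSucc, P.b m.succ)
      = ∑ m : Fin Q.M, F (Q.b m.castSucc, Q.b m.succ) := by
  rw [sum_pairs P k F hF, sum_pairs Q k F hF, equivk'_pairsF h]

/-- entry function for `Lᵀ * L` -/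
noncomputable def Fent (k : ℕ) (a b : ℕ) (p : ℕ × ℕ) : ℝ :=
  ∑ i ∈ Finset.range (p.2 - p.1 - k),
    (∑ t ∈ Finset.range (k + 1),
      if a = p.1 + i + t then (-1 : ℝ) ^ (k - t) * (Nat.choose k t : ℝ) else 0) *
    (∑ t ∈ Finset.range (k + 1),
      if b = p.1 + i + t then (-1 : ℝ) ^ (k - t) * (Nat.choose k t : ℝ) else 0)

lemma Fent_zero (k : ℕ) (a b : ℕ) (p : ℕ × ℕ) (h : p.2 - p.1 ≤ k) :
    Fent k a b p = 0 := by
  unfold Fent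
  rw [Nat.sub_eq_zero_of_le h]
  simp

lemma LTL_entry (P : IPart N) (k : ℕ) (a b : Fin N) :
    ((P.L k)ᵀ * P.L k) a b
      = ∑ m : Fin P.M, Fent k (a : ℕ) (b : ℕ) (P.b m.castSucc, P.b m.succ) := by
  rw [Matrix.mul_apply]
  rw [← Finset.univ_sigma_univ, Finset.sum_sigma]
  refine Finset.sum_congr rfl fun m _ => ?_
  rw [show Fent k (a : ℕ) (b : ℕ) (P.b m.castSucc, P.b m.succ)
      = ∑ i ∈ Finset.range (P.len m - k),
        ((∑ t ∈ Finset.range (k + 1),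
          if (a : ℕ) = P.b m.castSucc + i + t then (-1 : ℝ) ^ (k - t) * (Nat.choose k t : ℝ) else 0) *
         (∑ t ∈ Finset.range (k + 1),
          if (b : ℕ) = P.b m.castSucc + i + t then (-1 : ℝ) ^ (k - t) * (Nat.choose k t : ℝ) else 0))
      from rfl]
  rw [← Fin.sum_univ_eq_sum_range]
  exact Finset.sum_congr rfl fun s _ => rfl

lemma LTL_eq {k : ℕ} {P Q : IPart N} (h : equivk' k P Q) :
    (P.L k)ᵀ * P.L k = (Q.L k)ᵀ * Q.L k := by
  ext a b
  rw [LTL_entry, LTL_entry]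
  exact sum_pairs_congr h _ (Fent_zero k a b)

end Aux2

section Aux3
variable {N : ℕ}

lemma sum_Ico_partition (M : ℕ) (b : Fin (M + 1) → ℕ) (hb : Monotone b) (X : ℕ → ℝ) :
    ∑ m : Fin M, ∑ j ∈ Finset.Ico (b m.castSucc) (b m.succ), X j
      = ∑ j ∈ Finset.Ico (b 0) (b (Fin.last M)), X j := by
  induction M with
  | zero => simp [Fin.last]
  | succ M ih =>
    rw [Fin.sum_univ_castSucc]
    have h1 := ih (fun m => b m.castSucc)
      (fun x y hxy => hb (Fin.castSucc_le_castSucc_iff.mpr hxy))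
    have h2 : ∑ m : Fin M, ∑ j ∈ Finset.Ico (b m.castSucc.castSucc) (b m.castSucc.succ), X j
        = ∑ j ∈ Finset.Ico (b 0) (b (Fin.last M).castSucc), X j := by
      have e0 : ((0 : Fin (M + 1)).castSucc : Fin (M + 2)) = 0 := Fin.ext rfl
      calc ∑ m : Fin M, ∑ j ∈ Finset.Ico (b m.castSucc.castSucc) (b m.castSucc.succ), X j
          = ∑ m : Fin M, ∑ j ∈ Finset.Ico (b m.castSucc.castSucc) (b m.succ.castSucc), X j := by
            refine Finset.sum_congr rfl fun m _ => ?_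
            have hm : (m.castSucc.succ : Fin (M + 2)) = m.succ.castSucc := Fin.ext (by simp)
            rw [hm]
        _ = ∑ j ∈ Finset.Ico (b (0 : Fin (M + 1)).castSucc) (b (Fin.last M).castSucc), X j := h1
        _ = ∑ j ∈ Finset.Ico (b 0) (b (Fin.last M).castSucc), X j := by rw [e0]
    calc (∑ m : Fin M, ∑ j ∈ Finset.Ico (b m.castSucc.castSucc) (b m.castSucc.succ), X j)
          + ∑ j ∈ Finset.Ico (b (Fin.last M).castSucc) (b (Fin.last M).succ), X j
        = (∑ j ∈ Finset.Ico (b 0) (b (Fin.last M).castSucc), X j)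
          + ∑ j ∈ Finset.Ico (b (Fin.last M).castSucc) (b (Fin.last (M + 1))), X j := by
          rw [h2, Fin.succ_last]
      _ = ∑ j ∈ Finset.Ico (b 0) (b (Fin.last (M + 1))), X j :=
          Finset.sum_Ico_consecutive X (hb (Fin.zero_le _)) (hb (Fin.le_last _))

lemma sum_blocks (P : IPart N) (X : ℕ → ℝ) :
    ∑ m : Fin P.M, ∑ j ∈ Finset.range (P.len m), X (P.b m.castSucc + j)
      = ∑ j ∈ Finset.range N, X j := by
  have h := sum_Ico_partition P.M P.b P.mono.monotone X
  rw [P.first, P.last] at h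
  rw [← Finset.range_eq_Ico] at h
  rw [← h]
  refine Finset.sum_congr rfl fun m _ => ?_
  rw [Finset.sum_Ico_eq_sum_range]
  rfl

lemma neg_one_pow_sq (n : ℕ) : ((-1 : ℝ) ^ n) ^ 2 = 1 := by
  rw [← pow_mul, mul_comm, pow_mul]
  norm_num

lemma row_sq_le (k : ℕ) (c : ℕ → ℝ) (y : ℕ → ℝ) (hc : ∀ t, c t = (Nat.choose k t : ℝ)) :
    (∑ t ∈ Finset.range (k + 1), (-1 : ℝ) ^ (k - t) * c t * y t) ^ 2
      ≤ 2 ^ k * ∑ t ∈ Finset.range (k + 1), c t * (y t) ^ 2 := by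
  have key := Finset.sum_mul_sq_le_sq_mul_sq (Finset.range (k + 1))
    (fun t => Real.sqrt (c t)) (fun t => Real.sqrt (c t) * ((-1 : ℝ) ^ (k - t) * y t))
  have hcnn : ∀ t, 0 ≤ c t := fun t => by rw [hc t]; positivity
  have h1 : ∀ t ∈ Finset.range (k + 1),
      Real.sqrt (c t) * (Real.sqrt (c t) * ((-1 : ℝ) ^ (k - t) * y t))
        = (-1 : ℝ) ^ (k - t) * c t * y t := by
    intro t _
    rw [← mul_assoc, Real.mul_self_sqrt (hcnn t)]
    ring
  rw [Finset.sum_congr rfl h1] at key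
  have h2 : ∀ t ∈ Finset.range (k + 1), Real.sqrt (c t) ^ 2 = c t :=
    fun t _ => Real.sq_sqrt (hcnn t)
  rw [Finset.sum_congr rfl h2] at key
  have h3 : ∀ t ∈ Finset.range (k + 1),
      (Real.sqrt (c t) * ((-1 : ℝ) ^ (k - t) * y t)) ^ 2 = c t * (y t) ^ 2 := by
    intro t _
    rw [mul_pow, Real.sq_sqrt (hcnn t), mul_pow, neg_one_pow_sq]
    ring
  rw [Finset.sum_congr rfl h3] at key
  have h4 : ∑ t ∈ Finset.range (k + 1), c t = 2 ^ k := by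
    have := Nat.sum_range_choose k
    calc ∑ t ∈ Finset.range (k + 1), c t
        = ∑ t ∈ Finset.range (k + 1), (Nat.choose k t : ℝ) :=
          Finset.sum_congr rfl fun t _ => hc t
      _ = ((∑ t ∈ Finset.range (k + 1), Nat.choose k t : ℕ) : ℝ) := by push_cast; ring
      _ = 2 ^ k := by rw [this]; push_cast; ring
  rw [h4] at key
  exact key

lemma L_bound (P : IPart N) (k : ℕ) (x : Fin N → ℝ) :
    normSq (P.L k *ᵥ x) ≤ 4 ^ k * normSq x := by
  unfold normSq
  rw [← Finset.univ_sigma_univ, Finset.sum_sigma]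
  have step1 : ∀ m : Fin P.M, ∀ i : Fin (P.len m - k),
      ((P.L k *ᵥ x) ⟨m, i⟩) ^ 2
        ≤ 2 ^ k * ∑ t ∈ Finset.range (k + 1),
            (Nat.choose k t : ℝ) * (vext N x (P.b m.castSucc + i.val + t)) ^ 2 := by
    intro m i
    rw [L_mulVec]
    exact row_sq_le k (fun t => (Nat.choose k t : ℝ))
      (fun t => vext N x (P.b m.castSucc + i.val + t)) (fun t => rfl)
  have step2 : ∀ m : Fin P.M,
      ∑ i : Fin (P.len m - k), ((P.L k *ᵥ x) ⟨m, i⟩) ^ 2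
        ≤ 2 ^ k * (2 ^ k * ∑ j ∈ Finset.range (P.len m),
            (vext N x (P.b m.castSucc + j)) ^ 2) := by
    intro m
    calc ∑ i : Fin (P.len m - k), ((P.L k *ᵥ x) ⟨m, i⟩) ^ 2
        ≤ ∑ i : Fin (P.len m - k), 2 ^ k * ∑ t ∈ Finset.range (k + 1),
            (Nat.choose k t : ℝ) * (vext N x (P.b m.castSucc + i.val + t)) ^ 2 :=
          Finset.sum_le_sum fun i _ => step1 m i
      _ = 2 ^ k * ∑ i ∈ Finset.range (P.len m - k), ∑ t ∈ Finset.range (k + 1),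
            (Nat.choose k t : ℝ) * (vext N x (P.b m.castSucc + i + t)) ^ 2 := by
          rw [← Finset.mul_sum]
          congr 1
          exact Fin.sum_univ_eq_sum_range (fun i => ∑ t ∈ Finset.range (k + 1),
            (Nat.choose k t : ℝ) * (vext N x (P.b m.castSucc + i + t)) ^ 2) _
      _ = 2 ^ k * ∑ t ∈ Finset.range (k + 1), (Nat.choose k t : ℝ) *
            ∑ i ∈ Finset.range (P.len m - k), (vext N x (P.b m.castSucc + i + t)) ^ 2 := by
          rw [Finset.sum_comm]
          congr 1
          exact Finset.sum_congr rfl fun t _ => by rw [Finset.mul_sum]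
      _ ≤ 2 ^ k * ∑ t ∈ Finset.range (k + 1), (Nat.choose k t : ℝ) *
            ∑ j ∈ Finset.range (P.len m), (vext N x (P.b m.castSucc + j)) ^ 2 := by
          apply mul_le_mul_of_nonneg_left _ (by positivity)
          apply Finset.sum_le_sum
          intro t ht
          apply mul_le_mul_of_nonneg_left _ (by positivity)
          -- reindex i ↦ i + t
          have hinj : ∀ a ∈ Finset.range (P.len m - k), ∀ b ∈ Finset.range (P.len m - k),
              a + t = b + t → a = b := fun a _ b _ h => by omega
          calc ∑ i ∈ Finset.range (P.len m - k), vext N x (P.b m.castSucc + i + t) ^ 2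
              = ∑ i ∈ Finset.range (P.len m - k),
                  (fun j => vext N x (P.b m.castSucc + j) ^ 2) (i + t) := by
                refine Finset.sum_congr rfl fun i _ => ?_
                simp only
                rw [Nat.add_assoc]
            _ = ∑ j ∈ (Finset.range (P.len m - k)).image (fun i => i + t),
                  (fun j => vext N x (P.b m.castSucc + j) ^ 2) j := by
                rw [Finset.sum_image hinj]
            _ ≤ ∑ j ∈ Finset.range (P.len m), vext N x (P.b m.castSucc + j) ^ 2 := by
                apply Finset.sum_le_sum_of_subset_of_nonneg
                · intro j hj
                  simp only [Finset.mem_image, Finset.mem_range] at hj ⊢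
                  obtain ⟨i, hi, rfl⟩ := hj
                  have ht' := Finset.mem_range.mp ht
                  omega
                · intro j _ _
                  positivity
      _ = 2 ^ k * (2 ^ k * ∑ j ∈ Finset.range (P.len m),
            (vext N x (P.b m.castSucc + j)) ^ 2) := by
          rw [← Finset.sum_mul]
          have h4 : ∑ t ∈ Finset.range (k + 1), (Nat.choose k t : ℝ) = 2 ^ k := by
            have := Nat.sum_range_choose k
            calc ∑ t ∈ Finset.range (k + 1), (Nat.choose k t : ℝ)
                = ((∑ t ∈ Finset.range (k + 1), Nat.choose k t : ℕ) : ℝ) := by push_cast; ring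
              _ = 2 ^ k := by rw [this]; push_cast; ring
          rw [h4]
  calc ∑ m : Fin P.M, ∑ i : Fin (P.len m - k), ((P.L k *ᵥ x) ⟨m, i⟩) ^ 2
      ≤ ∑ m : Fin P.M, 2 ^ k * (2 ^ k * ∑ j ∈ Finset.range (P.len m),
          (vext N x (P.b m.castSucc + j)) ^ 2) := Finset.sum_le_sum fun m _ => step2 m
    _ = 4 ^ k * ∑ m : Fin P.M, ∑ j ∈ Finset.range (P.len m),
          (vext N x (P.b m.castSucc + j)) ^ 2 := by
        rw [Finset.mul_sum]
        refine Finset.sum_congr rfl fun m _ => ?_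
        rw [← mul_assoc]
        congr 1
        rw [show (4 : ℝ) ^ k = (2 * 2) ^ k by norm_num, mul_pow]
    _ = 4 ^ k * ∑ j ∈ Finset.range N, (vext N x j) ^ 2 := by
        rw [sum_blocks P (fun j => (vext N x j) ^ 2)]
    _ = 4 ^ k * normSq x := by
        congr 1
        rw [← Fin.sum_univ_eq_sum_range (fun j => (vext N x j) ^ 2) N]
        exact Finset.sum_congr rfl fun j _ => by rw [vext_lt x j.isLt]

end Aux3

section Aux4
variable {N : ℕ}

/-- the Gram-type matrix -/
noncomputable def Tmat (P : IPart N) (k : ℕ) : Matrix (Fin N) (Fin N) ℝ :=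
  (P.L k)ᵀ * P.L k

noncomputable def Amat (P : IPart N) (k : ℕ) (β : ℝ) : Matrix (Fin N) (Fin N) ℝ :=
  β ^ (2 * k) • Tmat P k + 1

lemma Smat_eq_inv (P : IPart N) (k : ℕ) (β : ℝ) : Smat P k β = (Amat P k β)⁻¹ := rfl

lemma Tmat_symm (P : IPart N) (k : ℕ) : (Tmat P k)ᵀ = Tmat P k := by
  rw [Tmat, Matrix.transpose_mul, Matrix.transpose_transpose]

lemma dot_Tmat (P : IPart N) (k : ℕ) (x y : Fin N → ℝ) :
    x ⬝ᵥ (Tmat P k *ᵥ y) = (P.L k *ᵥ x) ⬝ᵥ (P.L k *ᵥ y) := by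
  rw [Tmat, ← Matrix.mulVec_mulVec, Matrix.dotProduct_mulVec x ((P.L k)ᵀ) _,
    Matrix.vecMul_transpose]

lemma Tmat_nonneg (P : IPart N) (k : ℕ) (x : Fin N → ℝ) :
    0 ≤ x ⬝ᵥ (Tmat P k *ᵥ x) := by
  rw [dot_Tmat, ← normSq_eq_dot]
  exact normSq_nonneg' _

lemma dot_Tmat_sym (P : IPart N) (k : ℕ) (x y : Fin N → ℝ) :
    x ⬝ᵥ (Tmat P k *ᵥ y) = y ⬝ᵥ (Tmat P k *ᵥ x) := by
  rw [dot_Tmat, dot_Tmat, dotProduct_comm]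

lemma dot_Tmat_le (P : IPart N) (k : ℕ) (x : Fin N → ℝ) :
    x ⬝ᵥ (Tmat P k *ᵥ x) ≤ 4 ^ k * normSq x := by
  rw [dot_Tmat, ← normSq_eq_dot]
  exact L_bound P k x

lemma Amat_symm (P : IPart N) (k : ℕ) (β : ℝ) : (Amat P k β)ᵀ = Amat P k β := by
  rw [Amat, Matrix.transpose_add, Matrix.transpose_smul, Tmat_symm, Matrix.transpose_one]

lemma quadA (P : IPart N) (k : ℕ) (β : ℝ) (x : Fin N → ℝ) :
    x ⬝ᵥ (Amat P k β *ᵥ x) = β ^ (2 * k) * (x ⬝ᵥ (Tmat P k *ᵥ x)) + x ⬝ᵥ x := by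
  rw [Amat, Matrix.add_mulVec, Matrix.smul_mulVec, Matrix.one_mulVec,
    dotProduct_add, dotProduct_smul, smul_eq_mul]

lemma Amat_det (P : IPart N) (k : ℕ) {β : ℝ} (hβ : 0 < β) : IsUnit (Amat P k β).det := by
  have hβ2 : 0 ≤ β ^ (2 * k) := by positivity
  rw [isUnit_iff_ne_zero]
  intro h0
  obtain ⟨v, hv, hAv⟩ := Matrix.exists_mulVec_eq_zero_iff.mpr h0
  have hq := quadA P k β v
  rw [hAv, dotProduct_zero] at hq
  have h1 : 0 ≤ β ^ (2 * k) * (v ⬝ᵥ (Tmat P k *ᵥ v)) :=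
    mul_nonneg hβ2 (Tmat_nonneg P k v)
  have h2 : 0 < v ⬝ᵥ v := by
    rw [← normSq_eq_dot]
    rcases lt_or_eq_of_le (normSq_nonneg' v) with h | h
    · exact h
    · exact absurd (normSq_eq_zero' h.symm) hv
  linarith

lemma Smat_symm (P : IPart N) (k : ℕ) (β : ℝ) : (Smat P k β)ᵀ = Smat P k β := by
  rw [Smat_eq_inv, Matrix.transpose_nonsing_inv, Amat_symm]

lemma AS_eq_one (P : IPart N) (k : ℕ) {β : ℝ} (hβ : 0 < β) :
    Amat P k β * Smat P k β = 1 := by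
  rw [Smat_eq_inv]
  exact Matrix.mul_nonsing_inv _ (Amat_det P k hβ)

lemma g_decomp (P : IPart N) (k : ℕ) {β : ℝ} (hβ : 0 < β) (g : Fin N → ℝ) :
    g = Smat P k β *ᵥ g + β ^ (2 * k) • (Tmat P k *ᵥ (Smat P k β *ᵥ g)) := by
  conv_lhs => rw [← Matrix.one_mulVec g, ← AS_eq_one P k hβ, ← Matrix.mulVec_mulVec]
  rw [Amat, Matrix.add_mulVec, Matrix.smul_mulVec, Matrix.one_mulVec]
  rw [add_comm]

/-- the quadratic part of the Mumford-Shah value -/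
noncomputable def qv (P : IPart N) (k : ℕ) (β : ℝ) (g : Fin N → ℝ) : ℝ :=
  g ⬝ᵥ g - g ⬝ᵥ (Smat P k β *ᵥ g)

lemma q_formula (P : IPart N) (k : ℕ) {β : ℝ} (hβ : 0 < β) (g : Fin N → ℝ) :
    qv P k β g
      = β ^ (2 * k) * ((Smat P k β *ᵥ g) ⬝ᵥ (Tmat P k *ᵥ (Smat P k β *ᵥ g)))
        + (β ^ (2 * k)) ^ 2 *
          ((Tmat P k *ᵥ (Smat P k β *ᵥ g)) ⬝ᵥ (Tmat P k *ᵥ (Smat P k β *ᵥ g))) := by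
  set s := Smat P k β *ᵥ g with hs
  set w := Tmat P k *ᵥ s with hw
  have hg : g = s + β ^ (2 * k) • w := g_decomp P k hβ g
  rw [qv, ← dotProduct_sub]
  have hgs : g - s = β ^ (2 * k) • w := by rw [hg]; abel
  rw [hgs, hg]
  simp only [add_dotProduct, smul_dotProduct, dotProduct_smul,
    smul_eq_mul]
  ring
end Aux4

section Aux5
variable {N : ℕ}

lemma core_decomp (P : IPart N) (k : ℕ) {β : ℝ} (hβ : 0 < β) (g u : Fin N → ℝ) :
    normSq (u - g) + β ^ (2 * k) * (u ⬝ᵥ (Tmat P k *ᵥ u))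
      = normSq (u - Smat P k β *ᵥ g)
        + β ^ (2 * k) * ((u - Smat P k β *ᵥ g) ⬝ᵥ (Tmat P k *ᵥ (u - Smat P k β *ᵥ g)))
        + qv P k β g := by
  rw [q_formula P k hβ g]
  set s := Smat P k β *ᵥ g with hs
  set w := Tmat P k *ᵥ s with hw
  have hg : g = s + β ^ (2 * k) • w := g_decomp P k hβ g
  set d := u - s with hd
  have hu : u = s + d := by rw [hd]; abel
  rw [hu, hg]
  have h1 : s + d - (s + β ^ (2 * k) • w) = d - β ^ (2 * k) • w := by abel
  rw [h1]
  have h2 : Tmat P k *ᵥ (s + d) = w + Tmat P k *ᵥ d := by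
    rw [Matrix.mulVec_add, ← hw]
  rw [h2]
  have hsym : s ⬝ᵥ (Tmat P k *ᵥ d) = d ⬝ᵥ w := by
    rw [dot_Tmat_sym, ← hw]
  have hcomm : w ⬝ᵥ d = d ⬝ᵥ w := dotProduct_comm _ _
  simp only [normSq_eq_dot, sub_dotProduct, dotProduct_sub,
    add_dotProduct, dotProduct_add, smul_dotProduct,
    dotProduct_smul, smul_eq_mul]
  linear_combination (β ^ (2 * k)) * hsym - (β ^ (2 * k)) * hcomm

lemma q_nonneg (P : IPart N) (k : ℕ) {β : ℝ} (hβ : 0 < β) (g : Fin N → ℝ) :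
    0 ≤ qv P k β g := by
  rw [q_formula P k hβ g]
  have h1 := Tmat_nonneg P k (Smat P k β *ᵥ g)
  have h2 : 0 ≤ (Tmat P k *ᵥ (Smat P k β *ᵥ g)) ⬝ᵥ (Tmat P k *ᵥ (Smat P k β *ᵥ g)) := by
    rw [← normSq_eq_dot]; exact normSq_nonneg' _
  have hβ2 : (0:ℝ) ≤ β ^ (2 * k) := by positivity
  positivity

lemma q_le_c (P : IPart N) (k : ℕ) {β : ℝ} (hβ : 0 < β) (g : Fin N → ℝ) :
    qv P k β g ≤ (2 * β) ^ (2 * k) * normSq g := by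
  have hβ2 : (0:ℝ) < β ^ (2 * k) := by positivity
  set s := Smat P k β *ᵥ g with hs
  set w := Tmat P k *ᵥ s with hw
  have hg : g = s + β ^ (2 * k) • w := g_decomp P k hβ g
  -- step 1 : qv ≤ β2 * (g ⬝ᵥ T g)
  have step1 : qv P k β g ≤ β ^ (2 * k) * (g ⬝ᵥ (Tmat P k *ᵥ g)) := by
    rw [q_formula P k hβ g, ← hs, ← hw]
    have hTg : Tmat P k *ᵥ g = w + β ^ (2 * k) • (Tmat P k *ᵥ w) := by
      conv_lhs => rw [hg]
      rw [Matrix.mulVec_add, ← hw, Matrix.mulVec_smul]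
    have hsw : s ⬝ᵥ (Tmat P k *ᵥ w) = w ⬝ᵥ w := by
      rw [dot_Tmat_sym, ← hw]
    have hww : 0 ≤ w ⬝ᵥ w := by rw [← normSq_eq_dot]; exact normSq_nonneg' _
    have hwTw : 0 ≤ w ⬝ᵥ (Tmat P k *ᵥ w) := Tmat_nonneg P k w
    have hexp : g ⬝ᵥ (Tmat P k *ᵥ g)
        = s ⬝ᵥ w + β ^ (2 * k) * (w ⬝ᵥ w) + β ^ (2 * k) * (w ⬝ᵥ w)
          + (β ^ (2 * k)) ^ 2 * (w ⬝ᵥ (Tmat P k *ᵥ w)) := by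
      conv_lhs => rw [hTg]
      conv_lhs => rw [hg]
      simp only [add_dotProduct, dotProduct_add, smul_dotProduct,
        dotProduct_smul, smul_eq_mul]
      linear_combination (β ^ (2 * k)) * hsw
    rw [hexp]
    nlinarith [mul_nonneg (mul_nonneg hβ2.le hβ2.le) hww,
      mul_nonneg (mul_nonneg (mul_nonneg hβ2.le hβ2.le) hβ2.le) hwTw]
  calc qv P k β g ≤ β ^ (2 * k) * (g ⬝ᵥ (Tmat P k *ᵥ g)) := step1
    _ ≤ β ^ (2 * k) * (4 ^ k * normSq g) :=
        mul_le_mul_of_nonneg_left (dot_Tmat_le P k g) (le_of_lt hβ2)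
    _ = (2 * β) ^ (2 * k) * normSq g := by
        rw [mul_pow, ← mul_assoc]
        congr 1
        rw [mul_comm (β ^ (2*k)) _]
        congr 1
        rw [pow_mul]
        norm_num

end Aux5

section Aux6
variable {N : ℕ}

lemma equivk_eq' {N : ℕ} {k : ℕ} {P Q : IPart N} : equivk k P Q ↔ equivk' k P Q :=
  Iff.rfl

lemma equivk_refl {k : ℕ} (P : IPart N) : equivk k P P := rfl

lemma equivk_symm {k : ℕ} {P Q : IPart N} (h : equivk k P Q) : equivk k Q P := h.symm

lemma equivk_trans {k : ℕ} {P Q R : IPart N} (h1 : equivk k P Q) (h2 : equivk k Q R) :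
    equivk k P R := h1.trans h2

lemma classCard_congr {k : ℕ} {P Q : IPart N} (h : equivk k P Q) :
    classCard k P = classCard k Q := by
  unfold classCard
  congr 1
  ext M'
  exact exists_congr fun R =>
    and_congr_left' ⟨fun h' => equivk_trans h' h, fun h' => equivk_trans h' (equivk_symm h)⟩

lemma classCard_le {k : ℕ} (P : IPart N) : classCard k P ≤ P.M :=
  Nat.sInf_le ⟨P, equivk_refl P, rfl⟩

lemma Tmat_congr {k : ℕ} {P Q : IPart N} (h : equivk k P Q) : Tmat P k = Tmat Q k :=
  LTL_eq h

lemma Smat_congr {k : ℕ} (β : ℝ) {P Q : IPart N} (h : equivk k P Q) :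
    Smat P k β = Smat Q k β := by
  rw [Smat_eq_inv, Smat_eq_inv, Amat, Amat, Tmat_congr h]

lemma qv_congr {k : ℕ} (β : ℝ) {P Q : IPart N} (h : equivk k P Q) (g : Fin N → ℝ) :
    qv P k β g = qv Q k β g := by
  unfold qv
  rw [Smat_congr β h]

/-- Gc in terms of qv -/
lemma Gc_eq (P : IPart N) (k : ℕ) {β : ℝ} (γ : ℝ) (hβ : 0 < β) (g : Fin N → ℝ) :
    Gc k β γ g P = qv P k β g + γ * classCard k P := by
  unfold Gc
  congr 1
  set s := Smat P k β *ᵥ g with hs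
  set w := Tmat P k *ᵥ s with hw
  have hg : g = s + β ^ (2 * k) • w := g_decomp P k hβ g
  have h1 : normSq (P.L k *ᵥ s) = s ⬝ᵥ w := by
    rw [normSq_eq_dot, ← dot_Tmat, ← hw]
  have h2 : s - g = -(β ^ (2 * k) • w) := by rw [hg]; abel
  rw [h1, h2, q_formula P k hβ g, ← hs, ← hw]
  have h3 : normSq (-(β ^ (2 * k) • w)) = (β ^ (2 * k)) ^ 2 * (w ⬝ᵥ w) := by
    rw [normSq_eq_dot]
    simp only [neg_dotProduct, dotProduct_neg, neg_neg,
      smul_dotProduct, dotProduct_smul, smul_eq_mul]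
    ring
  rw [h3]

lemma Gc_congr {k : ℕ} {β γ : ℝ} (hβ : 0 < β) {P Q : IPart N} (h : equivk k P Q)
    (g : Fin N → ℝ) : Gc k β γ g P = Gc k β γ g Q := by
  rw [Gc_eq P k γ hβ g, Gc_eq Q k γ hβ g, qv_congr β h g, classCard_congr h]

/-- the Mumford-Shah functional in decomposed form -/
lemma msF_eq (P : IPart N) (k : ℕ) {β : ℝ} (γ : ℝ) (hβ : 0 < β) (g u : Fin N → ℝ) :
    msF k β γ g u P
      = normSq (u - Smat P k β *ᵥ g)
        + β ^ (2 * k) * ((u - Smat P k β *ᵥ g) ⬝ᵥ (Tmat P k *ᵥ (u - Smat P k β *ᵥ g)))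
        + qv P k β g + γ * P.M := by
  unfold msF
  have h1 : ∑ i, (u i - g i) ^ 2 = normSq (u - g) := by
    unfold normSq
    exact Finset.sum_congr rfl fun i _ => by simp
  have h2 : ∑ m : Fin P.M, diffEnergy k (P.len m) (P.restrict u m)
      = u ⬝ᵥ (Tmat P k *ᵥ u) := by
    rw [diff_sum_eq, dot_Tmat, normSq_eq_dot]
  rw [h1, h2]
  have := core_decomp P k hβ g u
  linarith

lemma msF_ge (P : IPart N) (k : ℕ) {β γ : ℝ} (hβ : 0 < β) (hγ : 0 < γ)
    (g u : Fin N → ℝ) :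
    normSq (u - Smat P k β *ᵥ g) + Gc k β γ g P ≤ msF k β γ g u P := by
  rw [msF_eq P k γ hβ g u, Gc_eq P k γ hβ g]
  have h1 : 0 ≤ β ^ (2 * k) * ((u - Smat P k β *ᵥ g) ⬝ᵥ (Tmat P k *ᵥ (u - Smat P k β *ᵥ g))) :=
    mul_nonneg (by positivity) (Tmat_nonneg P k _)
  have h2 : (classCard k P : ℝ) ≤ (P.M : ℝ) := Nat.cast_le.mpr (classCard_le P)
  nlinarith

lemma msF_at_min (P : IPart N) (k : ℕ) {β : ℝ} (γ : ℝ) (hβ : 0 < β) (g : Fin N → ℝ) :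
    msF k β γ g (Smat P k β *ᵥ g) P = qv P k β g + γ * P.M := by
  rw [msF_eq P k γ hβ g _]
  simp [normSq_eq_dot]

end Aux6

section Aux7
variable {N : ℕ}

lemma dot_symm_of {M : Matrix (Fin N) (Fin N) ℝ} (hM : Mᵀ = M) (x y : Fin N → ℝ) :
    x ⬝ᵥ (M *ᵥ y) = y ⬝ᵥ (M *ᵥ x) := by
  calc x ⬝ᵥ (M *ᵥ y) = (x ᵥ* M) ⬝ᵥ y := Matrix.dotProduct_mulVec x M y
    _ = (x ᵥ* Mᵀ) ⬝ᵥ y := by rw [hM]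
    _ = (M *ᵥ x) ⬝ᵥ y := by rw [Matrix.vecMul_transpose]
    _ = y ⬝ᵥ (M *ᵥ x) := dotProduct_comm _ _

lemma dot_Smat_sym (P : IPart N) (k : ℕ) (β : ℝ) (x y : Fin N → ℝ) :
    x ⬝ᵥ (Smat P k β *ᵥ y) = y ⬝ᵥ (Smat P k β *ᵥ x) :=
  dot_symm_of (Smat_symm P k β) x y

/-- the bilinear form associated with qv -/
noncomputable def bv (P : IPart N) (k : ℕ) (β : ℝ) (x y : Fin N → ℝ) : ℝ :=
  x ⬝ᵥ y - x ⬝ᵥ (Smat P k β *ᵥ y)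

lemma normSq_sub_expand {ι : Type*} [Fintype ι] (x y : ι → ℝ) :
    normSq (x - y) = normSq x - 2 * (x ⬝ᵥ y) + normSq y := by
  unfold normSq dotProduct
  rw [Finset.mul_sum]
  rw [show (∑ i, (x i ^ 2)) - (∑ i, 2 * (x i * y i)) + ∑ i, (y i ^ 2)
      = ∑ i, (x i ^ 2 - 2 * (x i * y i) + y i ^ 2) by
    rw [Finset.sum_add_distrib, Finset.sum_sub_distrib]]
  exact Finset.sum_congr rfl fun i _ => by simp [Pi.sub_apply]; ring

lemma bv_scale (P : IPart N) (k : ℕ) (β : ℝ) {τ : ℝ} (hτ : τ ≠ 0) (x y : Fin N → ℝ) :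
    bv P k β (τ • x) (τ⁻¹ • y) = bv P k β x y := by
  unfold bv
  rw [Matrix.mulVec_smul]
  simp only [smul_dotProduct, dotProduct_smul, smul_eq_mul]
  field_simp

lemma qv_add_sub (P : IPart N) (k : ℕ) (β : ℝ) (z y : Fin N → ℝ) :
    qv P k β (z + y) - qv P k β (z - y) = 4 * bv P k β z y := by
  unfold qv bv
  have hzy := dotProduct_comm z y
  have hS := dot_Smat_sym P k β y z
  simp only [Matrix.mulVec_add, Matrix.mulVec_sub, add_dotProduct,
    sub_dotProduct, dotProduct_add, dotProduct_sub]
  linear_combination -2 * hzy - 2 * hS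

lemma qv_diff (P : IPart N) (k : ℕ) (β : ℝ) (g f : Fin N → ℝ) :
    qv P k β g - qv P k β f = bv P k β (g - f) (g + f) := by
  unfold qv bv
  have h1 := dotProduct_comm g f
  have h2 := dot_Smat_sym P k β f g
  simp only [Matrix.mulVec_add, Matrix.mulVec_sub, add_dotProduct,
    sub_dotProduct, dotProduct_add, dotProduct_sub]
  linear_combination -h1 - h2

lemma pert_bound (P Q : IPart N) (k : ℕ) {β : ℝ} (hβ : 0 < β) (h w : Fin N → ℝ)
    {σ : ℝ} (hσ : 0 < σ) :
    bv P k β h w - bv Q k β h w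
      ≤ ((2 * β) ^ (2 * k) / 2) * (σ * normSq h + σ⁻¹ * normSq w) := by
  set c := (2 * β) ^ (2 * k) with hc
  have hc0 : (0:ℝ) < c := by rw [hc]; positivity
  -- generic bound for any z y
  have key : ∀ z y : Fin N → ℝ,
      bv P k β z y - bv Q k β z y ≤ (c / 2) * (normSq z + normSq y) := by
    intro z y
    have h4P := qv_add_sub P k β z y
    have h4Q := qv_add_sub Q k β z y
    have hP1 : qv P k β (z + y) ≤ c * normSq (z + y) := q_le_c P k hβ _
    have hQ1 : 0 ≤ qv Q k β (z + y) := q_nonneg Q k hβ _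
    have hP2 : 0 ≤ qv P k β (z - y) := q_nonneg P k hβ _
    have hQ2 : qv Q k β (z - y) ≤ c * normSq (z - y) := q_le_c Q k hβ _
    have hpar : normSq (z + y) + normSq (z - y) = 2 * normSq z + 2 * normSq y := by
      rw [normSq_add_expand, normSq_sub_expand]; ring
    nlinarith
  -- scaling
  have hτ0 : (0:ℝ) < Real.sqrt σ := Real.sqrt_pos.mpr hσ
  have hτ : Real.sqrt σ ≠ 0 := ne_of_gt hτ0
  have hzP := bv_scale P k β hτ h w
  have hzQ := bv_scale Q k β hτ h w
  have hkey := key (Real.sqrt σ • h) ((Real.sqrt σ)⁻¹ • w)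
  rw [hzP, hzQ] at hkey
  rw [normSq_smul, normSq_smul] at hkey
  have hsq : Real.sqrt σ ^ 2 = σ := Real.sq_sqrt hσ.le
  have hsq' : ((Real.sqrt σ)⁻¹) ^ 2 = σ⁻¹ := by rw [inv_pow, hsq]
  rw [hsq, hsq'] at hkey
  exact hkey

end Aux7


set_option maxHeartbeats 1000000 in
/-- if for data `f` there are `𝓘'` and `ε > 0` with
`𝓖_{𝓘'}(f) < 𝓖_𝓘(f) - ε` for all `𝓘` not equivalent to `𝓘'`, then with
`δ = min(ε / (2(2β)^{2k}(‖f‖ + 1/2)), 1/2)`, for every `g` with `‖g - f‖ < δ`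
the higher order Mumford-Shah problem for data `g` has a unique minimizer and
every optimal partition for `g` is equivalent to `𝓘'`. -/
theorem stability_of_minimizer (N k : ℕ) (β γ : ℝ) (hβ : 0 < β) (hγ : 0 < γ)
    (f : Fin N → ℝ) (ε : ℝ) (hε : 0 < ε) (P' : IPart N)
    (hsep : ∀ P : IPart N, ¬ equivk k P P' →
      Gc k β γ f P' < Gc k β γ f P - ε) :
    ∀ g : Fin N → ℝ,
      Real.sqrt (∑ i, (g i - f i) ^ 2)
        < min (ε / (2 * (2 * β) ^ (2 * k) * (Real.sqrt (∑ i, f i ^ 2) + 1 / 2)))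
            (1 / 2) →
      ∃ u : Fin N → ℝ,
        (∃ P : IPart N, ∀ (w : Fin N → ℝ) (Q : IPart N),
          msF k β γ g u P ≤ msF k β γ g w Q) ∧
        ∀ (v : Fin N → ℝ) (Q : IPart N),
          (∀ (w : Fin N → ℝ) (R : IPart N), msF k β γ g v Q ≤ msF k β γ g w R) →
          v = u ∧ equivk k Q P' := by
  intro g hg
  have hc0 : (0:ℝ) < (2 * β) ^ (2 * k) := by positivity
  set nf := Real.sqrt (∑ i, f i ^ 2) with hnfdef
  have hnf0 : 0 ≤ nf := Real.sqrt_nonneg _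
  set δ1 := ε / (2 * (2 * β) ^ (2 * k) * (nf + 1 / 2)) with hδ1def
  have hδ10 : 0 < δ1 := by rw [hδ1def]; positivity
  set nh := Real.sqrt (∑ i, (g i - f i) ^ 2) with hnhdef
  have hnh0 : 0 ≤ nh := Real.sqrt_nonneg _
  obtain ⟨hnh1, hnh2⟩ := lt_min_iff.mp hg
  have hnheq : Real.sqrt (normSq (g - f)) = nh := rfl
  have hnfeq : Real.sqrt (normSq f) = nf := rfl
  have hnsqh : normSq (g - f) = nh ^ 2 := by
    rw [← hnheq]
    exact (Real.sq_sqrt (normSq_nonneg' _)).symm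
  -- choose a minimal-cardinality representative of the class of P'
  have hne : {M' | ∃ Q : IPart N, equivk k Q P' ∧ Q.M = M'}.Nonempty :=
    ⟨P'.M, P', equivk_refl P', rfl⟩
  obtain ⟨P₀, hP₀e, hP₀M⟩ := Nat.sInf_mem hne
  have hP₀M' : P₀.M = classCard k P' := hP₀M
  set u := Smat P₀ k β *ᵥ g with hu
  have hval : msF k β γ g u P₀ = Gc k β γ g P' := by
    rw [hu, msF_at_min P₀ k γ hβ g, Gc_eq P' k γ hβ g, qv_congr β hP₀e g, hP₀M']
  -- bound on norm of g + f
  have hwb : Real.sqrt (normSq (g + f)) ≤ 2 * nf + nh := by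
    have e : g + f = (f + (g - f)) + f := by abel
    rw [e]
    calc Real.sqrt (normSq ((f + (g - f)) + f))
        ≤ Real.sqrt (normSq (f + (g - f))) + Real.sqrt (normSq f) := nrm_add_le _ _
      _ ≤ (Real.sqrt (normSq f) + Real.sqrt (normSq (g - f))) + Real.sqrt (normSq f) := by
          have h1 := nrm_add_le f (g - f)
          linarith
      _ = 2 * nf + nh := by rw [hnheq, hnfeq]; ring
  have hwsq : normSq (g + f) ≤ (2 * nf + nh) ^ 2 := by
    have h0 : normSq (g + f) = Real.sqrt (normSq (g + f)) ^ 2 :=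
      (Real.sq_sqrt (normSq_nonneg' _)).symm
    rw [h0]
    have h1 : 0 ≤ Real.sqrt (normSq (g + f)) := Real.sqrt_nonneg _
    nlinarith
  -- main comparison
  have hcomp : ∀ Q : IPart N, ¬ equivk k Q P' → Gc k β γ g P' < Gc k β γ g Q := by
    intro Q hQ
    have hsepQ := hsep Q hQ
    have hσ0 : (0:ℝ) < 2 * (nf + 1 / 2) / δ1 := by positivity
    have hp := pert_bound P' Q k hβ (g - f) (g + f) hσ0
    have hA : (2 * (nf + 1 / 2) / δ1) * normSq (g - f)
        < (2 * (nf + 1 / 2) / δ1) * δ1 ^ 2 := by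
      apply mul_lt_mul_of_pos_left _ hσ0
      rw [hnsqh]
      nlinarith
    have hAval : (2 * (nf + 1 / 2) / δ1) * δ1 ^ 2 = 2 * (nf + 1 / 2) * δ1 := by
      field_simp
    have hB : (2 * (nf + 1 / 2) / δ1)⁻¹ * normSq (g + f)
        ≤ (2 * (nf + 1 / 2) / δ1)⁻¹ * (2 * (nf + 1 / 2)) ^ 2 := by
      apply mul_le_mul_of_nonneg_left _ (inv_nonneg.mpr hσ0.le)
      calc normSq (g + f) ≤ (2 * nf + nh) ^ 2 := hwsq
        _ ≤ (2 * (nf + 1 / 2)) ^ 2 := by nlinarith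
    have hBval : (2 * (nf + 1 / 2) / δ1)⁻¹ * (2 * (nf + 1 / 2)) ^ 2
        = 2 * (nf + 1 / 2) * δ1 := by
      rw [inv_div]
      field_simp
    have hbv : bv P' k β (g - f) (g + f) - bv Q k β (g - f) (g + f) < ε := by
      have hc2 : (0:ℝ) < (2 * β) ^ (2 * k) / 2 := by positivity
      calc bv P' k β (g - f) (g + f) - bv Q k β (g - f) (g + f)
          ≤ ((2 * β) ^ (2 * k) / 2) * ((2 * (nf + 1 / 2) / δ1) * normSq (g - f)
              + (2 * (nf + 1 / 2) / δ1)⁻¹ * normSq (g + f)) := hp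
        _ < ((2 * β) ^ (2 * k) / 2) * (2 * (nf + 1 / 2) * δ1 + 2 * (nf + 1 / 2) * δ1) := by
            apply mul_lt_mul_of_pos_left _ hc2
            linarith
        _ = ε := by
            have hd : (2 * (2 * β) ^ (2 * k) * (nf + 1 / 2)) ≠ 0 := by positivity
            have h9 : δ1 * (2 * (2 * β) ^ (2 * k) * (nf + 1 / 2)) = ε := by
              rw [hδ1def]
              exact div_mul_cancel₀ ε hd
            linear_combination h9
    have hqdP := qv_diff P' k β g f
    have hqdQ := qv_diff Q k β g f
    rw [Gc_eq P' k γ hβ f, Gc_eq Q k γ hβ f] at hsepQ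
    rw [Gc_eq P' k γ hβ g, Gc_eq Q k γ hβ g]
    linarith
  refine ⟨u, ⟨P₀, fun w Q => ?_⟩, fun v Q hopt => ?_⟩
  · rw [hval]
    have h2 := msF_ge Q k hβ hγ g w
    have h3 := normSq_nonneg' (w - Smat Q k β *ᵥ g)
    by_cases hQ : equivk k Q P'
    · have h4 : Gc k β γ g Q = Gc k β γ g P' := Gc_congr hβ hQ g
      linarith
    · have h5 := hcomp Q hQ
      linarith
  · have hople := hopt u P₀
    rw [hval] at hople
    have h2 := msF_ge Q k hβ hγ g v
    have h3 := normSq_nonneg' (v - Smat Q k β *ᵥ g)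
    have hQ : equivk k Q P' := by
      by_contra hQ
      have h1 := hcomp Q hQ
      linarith
    have hGcQ : Gc k β γ g Q = Gc k β γ g P' := Gc_congr hβ hQ g
    rw [hGcQ] at h2
    have h4 : normSq (v - Smat Q k β *ᵥ g) ≤ 0 := by linarith
    have h5 : v - Smat Q k β *ᵥ g = 0 :=
      normSq_eq_zero' (le_antisymm h4 (normSq_nonneg' _))
    have h6 : v = Smat Q k β *ᵥ g := by rwa [sub_eq_zero] at h5
    have h7 : Smat Q k β = Smat P₀ k β :=
      Smat_congr β (equivk_trans hQ (equivk_symm hP₀e))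
    refine ⟨?_, hQ⟩
    rw [h6, h7, ← hu]
end

section
/- For data f = (0,1,0), order k = 2, and any 0 < γ < 2/3, choosing β with β⁴ = γ/(4 - 6γ) makes the second order Mumford-Shah functional have (at least) two distinct minimizers: u² = (0,1,0) with a two-segment partition (value γ) and u¹ = (2β⁴, 1+2β⁴, 2β⁴)/(1+6β⁴) with the one-segment partition (value 4β⁴/(1+6β⁴) = γ and u¹ ≠ u²). -/
open Finset Matrix

/-- The second order (k = 2) Mumford-Shah functional on `ℝ³`, normalized by the
number of jumps: `(u,𝓘) ↦ ‖u - f‖₂² + β⁴ Σ_{I∈𝓘}‖∇² u_I‖₂² + γ(|𝓘| - 1)`. -/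
noncomputable def msF2 (β γ : ℝ) (f u : Fin 3 → ℝ) (P : IPart 3) : ℝ :=
  (∑ i, (u i - f i) ^ 2)
    + β ^ 4 * ∑ m : Fin P.M, diffEnergy 2 (P.len m) (P.restrict u m)
    + γ * ((P.M - 1 : ℕ) : ℝ)

/-- The one-segment partition `{(1,2,3)}` of `{1,2,3}`. -/
def Q1 : IPart 3 := ⟨1, ![0, 3], by decide, by decide, by decide⟩

/-- A two-segment partition `{(1),(2,3)}` of `{1,2,3}`. -/
def Q2 : IPart 3 := ⟨2, ![0, 1, 3], by decide, by decide, by decide⟩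

lemma diffEnergy_nonneg (k q : ℕ) (v : Fin q → ℝ) : 0 ≤ diffEnergy k q v :=
  Finset.sum_nonneg fun _ _ => sq_nonneg _

lemma diffEnergy_of_le (k q : ℕ) (h : q ≤ k) (v : Fin q → ℝ) : diffEnergy k q v = 0 := by
  have h0 : q - k = 0 := by omega
  haveI : IsEmpty (Fin (q - k)) := by rw [h0]; infer_instance
  unfold diffEnergy
  rw [Finset.univ_eq_empty, Finset.sum_empty]

lemma diffEnergy_two_three (q : ℕ) (h : q = 3) (v : Fin q → ℝ) :
    diffEnergy 2 q v =
      (v ⟨0, by omega⟩ - 2 * v ⟨1, by omega⟩ + v ⟨2, by omega⟩) ^ 2 := by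
  subst h
  unfold diffEnergy
  rw [Fin.sum_univ_one, Fin.sum_univ_three]
  norm_num
  ring

lemma quad_lb (a : ℝ) (ha : 0 < a) (w0 w1 w2 : ℝ) :
    4 * a / (1 + 6 * a) ≤ w0 ^ 2 + (w1 - 1) ^ 2 + w2 ^ 2 + a * (w0 - 2 * w1 + w2) ^ 2 := by
  have hA : (0:ℝ) < 1 + 6 * a := by linarith
  rw [div_le_iff₀ hA]
  have key : (w0 ^ 2 + (w1 - 1) ^ 2 + w2 ^ 2 + a * (w0 - 2 * w1 + w2) ^ 2) * (1 + 6 * a) ^ 2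
      - 4 * a * (1 + 6 * a)
      = ((1 + 6 * a) * w0 - 2 * a) ^ 2 + ((1 + 6 * a) * w1 - (1 + 2 * a)) ^ 2
        + ((1 + 6 * a) * w2 - 2 * a) ^ 2
        + a * ((1 + 6 * a) * (w0 - 2 * w1 + w2) + 2) ^ 2 := by ring
  nlinarith [key, sq_nonneg ((1 + 6 * a) * w0 - 2 * a), sq_nonneg ((1 + 6 * a) * w1 - (1 + 2 * a)),
    sq_nonneg ((1 + 6 * a) * w2 - 2 * a),
    mul_nonneg ha.le (sq_nonneg ((1 + 6 * a) * (w0 - 2 * w1 + w2) + 2)), hA]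

lemma msF2_lb (β γ : ℝ) (ha : 0 < β ^ 4) (hγ0 : 0 < γ)
    (hγeq : 4 * β ^ 4 / (1 + 6 * β ^ 4) = γ) (w : Fin 3 → ℝ) (Q : IPart 3) :
    γ ≤ msF2 β γ ![0, 1, 0] w Q := by
  obtain ⟨M, b, mono, first, last⟩ := Q
  have hdata : (0:ℝ) ≤ ∑ i, (w i - ![0,1,0] i) ^ 2 :=
    Finset.sum_nonneg fun _ _ => sq_nonneg _
  have hsE : (0:ℝ) ≤ β ^ 4 * ∑ m : Fin M, diffEnergy 2 ((IPart.mk M b mono first last).len m)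
      ((IPart.mk M b mono first last).restrict w m) :=
    mul_nonneg ha.le (Finset.sum_nonneg fun m _ => diffEnergy_nonneg _ _ _)
  match M, b, mono, first, last with
  | 0, b, mono, first, last =>
      exfalso
      have : b (Fin.last 0) = b 0 := rfl
      omega
  | 1, b, mono, first, last =>
      have hb1 : b 1 = 3 := last
      have hlen : (IPart.mk 1 b mono first last).len 0 = 3 := by
        simp only [IPart.len]
        have h1 : Fin.succ (0 : Fin 1) = 1 := rfl
        have h2 : Fin.castSucc (0 : Fin 1) = 0 := rfl
        rw [h1, h2, first, hb1]
      simp only [msF2, Fin.sum_univ_one]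
      rw [diffEnergy_two_three _ hlen]
      simp only [IPart.restrict]
      have hb0 : b (Fin.castSucc (0 : Fin 1)) = 0 := first
      simp only [hb0]
      have e0 : w ⟨0 + (0:ℕ), by omega⟩ = w 0 := rfl
      have e1 : w ⟨0 + (1:ℕ), by omega⟩ = w 1 := rfl
      have e2 : w ⟨0 + (2:ℕ), by omega⟩ = w 2 := rfl
      rw [e0, e1, e2]
      rw [Fin.sum_univ_three]
      simp only [Matrix.cons_val_zero, Matrix.cons_val_one, Matrix.head_cons,
        Matrix.cons_val_two, Matrix.tail_cons]
      have := quad_lb (β ^ 4) ha (w 0) (w 1) (w 2)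
      rw [hγeq] at this
      norm_num
      linarith [this]
  | (n + 2), b, mono, first, last =>
      have hM : (1:ℝ) ≤ ((n + 2 - 1 : ℕ) : ℝ) := by
        have : (1:ℕ) ≤ n + 2 - 1 := by omega
        exact_mod_cast this
      have : γ * 1 ≤ γ * ((n + 2 - 1 : ℕ) : ℝ) :=
        mul_le_mul_of_nonneg_left hM hγ0.le
      simp only [msF2]
      nlinarith [hdata, hsE, this]

lemma msF2_val1 (β γ : ℝ) (ha : 0 < β ^ 4) :
    msF2 β γ ![0,1,0] (fun i => ![2 * β ^ 4, 1 + 2 * β ^ 4, 2 * β ^ 4] i / (1 + 6 * β ^ 4)) Q1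
      = 4 * β ^ 4 / (1 + 6 * β ^ 4) := by
  have hA : (0:ℝ) < 1 + 6 * β ^ 4 := by linarith
  have hs : ∀ g : Fin Q1.M → ℝ, ∑ m, g m = g ⟨0, by decide⟩ := fun g => Fin.sum_univ_one g
  simp only [msF2, hs]
  rw [diffEnergy_two_three _ (by decide : Q1.len ⟨0, by decide⟩ = 3)]
  simp only [IPart.restrict, Q1]
  rw [Fin.sum_univ_three]
  norm_num [Matrix.cons_val_two, Matrix.tail_cons, Matrix.head_cons]
  field_simp
  ring

lemma msF2_val2 (β γ : ℝ) :
    msF2 β γ ![0,1,0] ![0,1,0] Q2 = γ := by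
  have hs : ∀ g : Fin Q2.M → ℝ, ∑ m, g m = g ⟨0, by decide⟩ + g ⟨1, by decide⟩ := fun g => Fin.sum_univ_two g
  simp only [msF2, hs, Fin.sum_univ_three]
  rw [diffEnergy_of_le 2 _ (by decide) _, diffEnergy_of_le 2 _ (by decide) _]
  norm_num [Q2]

/-- for `f = (0,1,0)`, `k = 2`, any `0 < γ < 2/3`, and `β > 0` with
`β⁴ = γ/(4 - 6γ)`, the second order Mumford-Shah functional has (at least) two
distinct minimizers: `u² = (0,1,0)` with a two-segment partition (value `γ`) and
`u¹ = (2β⁴, 1+2β⁴, 2β⁴)/(1+6β⁴)` with the one-segment partition (value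
`4β⁴/(1+6β⁴) = γ`), and `u¹ ≠ u²`. -/
theorem non_uniqueness_example (γ : ℝ) (hγ0 : 0 < γ) (hγ1 : γ < 2 / 3)
    (β : ℝ) (hβ : 0 < β) (hβ4 : β ^ 4 = γ / (4 - 6 * γ)) :
    let f : Fin 3 → ℝ := ![0, 1, 0]
    let u1 : Fin 3 → ℝ :=
      fun i => ![2 * β ^ 4, 1 + 2 * β ^ 4, 2 * β ^ 4] i / (1 + 6 * β ^ 4)
    let u2 : Fin 3 → ℝ := ![0, 1, 0]
    u1 ≠ u2 ∧
    (∀ (w : Fin 3 → ℝ) (Q : IPart 3), msF2 β γ f u1 Q1 ≤ msF2 β γ f w Q) ∧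
    (∀ (w : Fin 3 → ℝ) (Q : IPart 3), msF2 β γ f u2 Q2 ≤ msF2 β γ f w Q) ∧
    msF2 β γ f u1 Q1 = γ ∧ msF2 β γ f u2 Q2 = γ ∧
    4 * β ^ 4 / (1 + 6 * β ^ 4) = γ := by
  intro f u1 u2
  have ha : 0 < β ^ 4 := by positivity
  have h46 : (0:ℝ) < 4 - 6 * γ := by linarith
  have hA : (0:ℝ) < 1 + 6 * β ^ 4 := by linarith
  have hγeq : 4 * β ^ 4 / (1 + 6 * β ^ 4) = γ := by
    rw [hβ4]
    rw [div_eq_iff (by positivity)]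
    field_simp [show (4:ℝ) - γ * 6 ≠ 0 by linarith]
    ring
  have hv1 : msF2 β γ f u1 Q1 = γ := by
    rw [show msF2 β γ f u1 Q1 = 4 * β ^ 4 / (1 + 6 * β ^ 4) from msF2_val1 β γ ha, hγeq]
  have hv2 : msF2 β γ f u2 Q2 = γ := msF2_val2 β γ
  refine ⟨?_, ?_, ?_, hv1, hv2, hγeq⟩
  · intro h
    have h0 := congrFun h 0
    simp only [u1, u2, Matrix.cons_val_zero] at h0
    rw [div_eq_zero_iff] at h0
    rcases h0 with h0 | h0 <;> nlinarith [ha]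
  · intro w Q
    rw [hv1]
    exact msF2_lb β γ ha hγ0 hγeq w Q
  · intro w Q
    rw [hv2]
    exact msF2_lb β γ ha hγ0 hγeq w Q
end
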